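/- Let C be a salient closed convex cone in a finite-dimensional real normed space E, and let (sᵢⁿ)ₙ be sequences in C \ {0} for i = 1,…,m. If the sequence of sums (s₁ⁿ + ⋯ + sₘⁿ)ₙ converges, then each sequence (sᵢⁿ)ₙ has a convergent subsequence. -/

import Mathlib

open Filter Pointwise

/-- In a salient closed cone, `‖x + y‖ ≥ c‖x‖` for some uniform `c > 0`. -/
lemma salient_cone_norm_add_lower_bound
    {E : Type*} [NormedAddCommGroup E] [NormedSpace ℝ E] [FiniteDimensional ℝ E]
    (C : Set E) (hCclosed : IsClosed C)
    (hCcone : ∀ t : ℝ, 0 < t → t • C ⊆ C)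
    (hCsalient : ∀ x ∈ C, -x ∈ C → x = 0) :
    ∃ c : ℝ, 0 < c ∧ ∀ x ∈ C, ∀ y ∈ C, c * ‖x‖ ≤ ‖x + y‖ := by
  by_contra h
  push_neg at h
  have hseq : ∀ n : ℕ, ∃ x ∈ C, ∃ y ∈ C, ‖x + y‖ < (1 / (n + 1 : ℝ)) * ‖x‖ := by
    intro n
    exact h (1 / (n + 1 : ℝ)) (by positivity)
  choose x hx y hy hxy using hseq
  have hxne : ∀ n, x n ≠ 0 := by
    intro n hn
    have := hxy n
    rw [hn, norm_zero, mul_zero] at this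
    exact absurd this (not_lt.2 (norm_nonneg _))
  set u : ℕ → E := fun n => (‖x n‖)⁻¹ • x n with hu
  set v : ℕ → E := fun n => (‖x n‖)⁻¹ • y n with hv
  have hxpos : ∀ n, (0:ℝ) < ‖x n‖ := fun n => norm_pos_iff.2 (hxne n)
  have huC : ∀ n, u n ∈ C := fun n =>
    hCcone _ (inv_pos.2 (hxpos n)) (Set.smul_mem_smul_set (hx n))
  have hvC : ∀ n, v n ∈ C := fun n =>
    hCcone _ (inv_pos.2 (hxpos n)) (Set.smul_mem_smul_set (hy n))
  have hunorm : ∀ n, ‖u n‖ = 1 := by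
    intro n
    rw [hu]
    simp [norm_smul, abs_of_pos (inv_pos.2 (hxpos n)), inv_mul_cancel₀ (hxpos n).ne']
  have hsum : Tendsto (fun n => u n + v n) atTop (nhds 0) := by
    have hbound : ∀ n : ℕ, ‖u n + v n‖ ≤ 1 / (n + 1 : ℝ) := by
      intro n
      have : u n + v n = (‖x n‖)⁻¹ • (x n + y n) := by simp [hu, hv, smul_add]
      rw [this, norm_smul, norm_inv, norm_norm]
      rw [inv_mul_le_iff₀ (hxpos n)]
      exact le_of_lt (by linarith [hxy n])
    have h0 : Tendsto (fun n : ℕ => 1 / (n + 1 : ℝ)) atTop (nhds 0) :=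
      tendsto_one_div_add_atTop_nhds_zero_nat
    rw [tendsto_zero_iff_norm_tendsto_zero]
    exact squeeze_zero (fun n => norm_nonneg _) hbound h0
  -- extract convergent subsequence of u
  have hcompact : IsCompact (Metric.sphere (0:E) 1) := isCompact_sphere 0 1
  have husphere : ∀ n, u n ∈ Metric.sphere (0:E) 1 := by
    intro n; simp [Metric.mem_sphere, dist_eq_norm, hunorm n]
  obtain ⟨a, ha, φ, hφ, hconv⟩ := hcompact.tendsto_subseq husphere
  have haC : a ∈ C := hCclosed.mem_of_tendsto hconv (Filter.Eventually.of_forall fun n => huC _)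
  have hvconv : Tendsto (v ∘ φ) atTop (nhds (-a)) := by
    have : Tendsto (fun n => (u (φ n) + v (φ n)) - u (φ n)) atTop (nhds (0 - a)) :=
      Tendsto.sub (hsum.comp hφ.tendsto_atTop) hconv
    simpa [Function.comp_def] using this
  have hnaC : -a ∈ C := hCclosed.mem_of_tendsto hvconv (Filter.Eventually.of_forall fun n => hvC _)
  have ha0 : a = 0 := hCsalient a haC hnaC
  have : ‖a‖ = 1 := by simpa [Metric.mem_sphere, dist_eq_norm] using ha
  rw [ha0, norm_zero] at this
  norm_num at this

/-- Let `C` be a salient closed convex cone in a finite-dimensional real normed space,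
and `(sᵢⁿ)ₙ` sequences in `C \ {0}`, `i = 1, …, m`. If the sequence of sums
`(s₁ⁿ + ⋯ + sₘⁿ)ₙ` converges, then each sequence `(sᵢⁿ)ₙ` has a convergent subsequence. -/
theorem exists_convergent_subseq_of_sum_converges_in_salient_cone
    {E : Type*} [NormedAddCommGroup E] [NormedSpace ℝ E] [FiniteDimensional ℝ E]
    (C : Set E) (hCclosed : IsClosed C) (hCconv : Convex ℝ C)
    (hCcone : ∀ t : ℝ, 0 < t → t • C ⊆ C)
    (hCsalient : ∀ x ∈ C, -x ∈ C → x = 0)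
    (m : ℕ) (s : Fin m → ℕ → E)
    (hs : ∀ i n, s i n ∈ C \ {0})
    (hconv : ∃ L : E, Tendsto (fun n => ∑ i, s i n) atTop (nhds L)) :
    ∀ i, ∃ φ : ℕ → ℕ, StrictMono φ ∧ ∃ L : E, Tendsto (s i ∘ φ) atTop (nhds L) := by
  intro i
  -- 0 ∈ C since C is a nonempty closed cone
  have h0C : (0:E) ∈ C := by
    have hx0 : s i 0 ∈ C := (hs i 0).1
    have htend : Tendsto (fun n : ℕ => (1 / (n + 1 : ℝ)) • s i 0) atTop (nhds 0) := by
      have : Tendsto (fun n : ℕ => 1 / (n + 1 : ℝ)) atTop (nhds 0) :=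
        tendsto_one_div_add_atTop_nhds_zero_nat
      simpa using this.smul_const (s i 0)
    exact hCclosed.mem_of_tendsto htend (Filter.Eventually.of_forall fun n =>
      hCcone _ (by positivity) (Set.smul_mem_smul_set hx0))
  -- C is closed under addition
  have hadd : ∀ x ∈ C, ∀ y ∈ C, x + y ∈ C := by
    intro x hx y hy
    have hmid : (1/2 : ℝ) • x + (1/2 : ℝ) • y ∈ C :=
      hCconv hx hy (by norm_num) (by norm_num) (by norm_num)
    have := hCcone 2 (by norm_num) (Set.smul_mem_smul_set hmid)
    have heq : (2:ℝ) • ((1/2 : ℝ) • x + (1/2 : ℝ) • y) = x + y := by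
      rw [smul_add, smul_smul, smul_smul]; norm_num
    rwa [heq] at this
  obtain ⟨c, hc, hkey⟩ := salient_cone_norm_add_lower_bound C hCclosed hCcone hCsalient
  obtain ⟨L, hL⟩ := hconv
  -- bound on the sums
  obtain ⟨M, hM⟩ := (hL.norm.bddAbove_range).imp fun M hM n =>
    hM (Set.mem_range_self n)
  -- each s i n is bounded
  have hbound : ∀ n, ‖s i n‖ ≤ M / c := by
    intro n
    have hrest : ∑ j ∈ Finset.univ.erase i, s j n ∈ C := by
      refine Finset.sum_induction _ (· ∈ C) (fun a b ha hb => hadd a ha b hb) h0C ?_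
      intro j _
      exact (hs j n).1
    have hsum_eq : s i n + ∑ j ∈ Finset.univ.erase i, s j n = ∑ j, s j n :=
      Finset.add_sum_erase _ (fun j => s j n) (Finset.mem_univ i)
    have := hkey (s i n) (hs i n).1 _ hrest
    rw [hsum_eq] at this
    have hMn : ‖∑ j, s j n‖ ≤ M := hM n
    rw [le_div_iff₀ hc, mul_comm]
    linarith
  have hball : ∀ n, s i n ∈ Metric.closedBall (0:E) (M / c) := by
    intro n; simpa [Metric.mem_closedBall, dist_eq_norm] using hbound n
  obtain ⟨a, _, φ, hφ, hconv'⟩ :=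
    (isCompact_closedBall (0:E) (M / c)).tendsto_subseq hball
  exact ⟨φ, hφ, a, hconv'⟩
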